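/- Let (G, w) be an edge-weighted simple graph on vertices enumerated v_1, …, v_n. For each 0 ≤ i ≤ n − 1 suppose B_i is a minimal element of the flow-up class F_i, i.e. B_i ∈ F_i, B_i(v_{i+1}) > 0, and B_i(v_{i+1}) ≤ |F(v_{i+1})| for every F ∈ F_i. Then {B_0, B_1, …, B_{n−1}} is a ℤ-module basis of the spline module S_G. -/

import Mathlib

/-- An integer spline on the edge-weighted graph `(G, w)`: a vertex labeling `g : V → ℤ` such
that for every edge `{u, x}` of `G`, the weight `w {u, x}` divides `g u - g x` in `ℤ`. -/
def IsSpline {V : Type*} (G : SimpleGraph V) (w : Sym2 V → ℕ) (g : V → ℤ) : Prop :=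
  ∀ u x : V, G.Adj u x → (w s(u, x) : ℤ) ∣ g u - g x

/-- The ℤ-module of integer splines on `(G, w)`, as a submodule of `V → ℤ`. -/
def splineSubmodule {V : Type*} (G : SimpleGraph V) (w : Sym2 V → ℕ) :
    Submodule ℤ (V → ℤ) where
  carrier := {g | IsSpline G w g}
  add_mem' := by
    intro a b ha hb u x hux
    simpa [sub_add_sub_comm] using dvd_add (ha u x hux) (hb u x hux)
  zero_mem' := by intro u x hux; simp
  smul_mem' := by
    intro c g hg u x hux
    simpa [mul_sub] using (hg u x hux).mul_left c


/-- If for each `0 ≤ i ≤ n - 1` the spline `B i` is a minimal element of the flow-up class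
`F_i` (i.e. `B i` vanishes at `v_1, …, v_i`, its leading term `B i v_{i+1}` is positive, and
`B i v_{i+1} ≤ |F v_{i+1}|` for every `F ∈ F_i`), then `{B 0, …, B (n-1)}` is a ℤ-module basis
of the spline module `S_G`.  (Vertices enumerated as `Fin n`, with `v_{k+1}` of value `k`.) -/
theorem minimal_flowup_basis (n : ℕ) (G : SimpleGraph (Fin n)) (w : Sym2 (Fin n) → ℕ)
    (hw : ∀ e ∈ G.edgeSet, 0 < w e)
    (B : Fin n → (Fin n → ℤ))
    (hspline : ∀ i, IsSpline G w (B i))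
    (hzero : ∀ i j : Fin n, j < i → B i j = 0)
    (hpos : ∀ i, 0 < B i i)
    (hmin : ∀ i : Fin n, ∀ g : Fin n → ℤ, IsSpline G w g →
      (∀ j : Fin n, j < i → g j = 0) → g i ≠ 0 → B i i ≤ |g i|) :
    ∃ b : Module.Basis (Fin n) ℤ (splineSubmodule G w), ∀ i, (b i : Fin n → ℤ) = B i := by
  classical
  -- the candidate basis vectors inside the submodule
  have hmem : ∀ i, B i ∈ splineSubmodule G w := fun i => hspline i
  set s : Fin n → (splineSubmodule G w) := fun i => ⟨B i, hmem i⟩ with hs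
  -- spanning key lemma
  have key : ∀ k : ℕ, ∀ i : ℕ, n ≤ i + k → ∀ g : Fin n → ℤ, IsSpline G w g →
      (∀ j : Fin n, (j : ℕ) < i → g j = 0) → ∃ c : Fin n → ℤ, g = ∑ j, c j • B j := by
    intro k
    induction k with
    | zero =>
      intro i hik g hg hv
      refine ⟨0, ?_⟩
      have : g = 0 := funext fun j => hv j (lt_of_lt_of_le j.isLt (by omega))
      simp [this]
    | succ k ih =>
      intro i hik g hg hv
      by_cases hi : n ≤ i + k
      · exact ih i hi g hg hv
      have hi' : i < n := by omega
      set ii : Fin n := ⟨i, hi'⟩ with hii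
      set q : ℤ := g ii / B ii ii with hq
      set h : Fin n → ℤ := g - q • B ii with hh
      have hhs : IsSpline G w h :=
        (splineSubmodule G w).sub_mem hg ((splineSubmodule G w).smul_mem q (hmem ii))
      have hlow : ∀ j : Fin n, (j : ℕ) < i → h j = 0 := by
        intro j hj
        have hBz : B ii j = 0 := hzero ii j hj
        simp [hh, hv j hj, hBz]
      have hmod : h ii = g ii % B ii ii := by
        simp only [hh, Pi.sub_apply, Pi.smul_apply, smul_eq_mul, hq]
        rw [Int.emod_def]; ring
      have hii0 : h ii = 0 := by
        by_contra hne
        have hle := hmin ii h hhs (fun j hj => hlow j hj) hne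
        have h1 : 0 ≤ h ii := by
          rw [hmod]; exact Int.emod_nonneg _ (by have := hpos ii; omega)
        have h2 : h ii < B ii ii := by
          rw [hmod]; exact Int.emod_lt_of_pos _ (hpos ii)
        rw [abs_of_nonneg h1] at hle
        omega
      obtain ⟨c, hc⟩ := ih (i + 1) (by omega) h hhs (by
        intro j hj
        rcases lt_or_eq_of_le (Nat.lt_succ_iff.mp hj) with hj' | hj'
        · exact hlow j hj'
        · have : j = ii := Fin.ext hj'
          rw [this]; exact hii0)
      refine ⟨c + Pi.single ii q, ?_⟩
      have hg' : g = h + q • B ii := by simp [hh]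
      rw [hg', hc]
      simp only [Pi.add_apply, add_smul]
      rw [Finset.sum_add_distrib]
      congr 1
      simp [Pi.single_apply, ite_smul, Finset.sum_ite_eq']
  -- linear independence
  have li : LinearIndependent ℤ s := by
    rw [Fintype.linearIndependent_iff]
    intro c hsum
    have hfun : ∑ j, c j • B j = 0 := by
      have := congrArg (Submodule.subtype (splineSubmodule G w)) hsum
      simpa [s, map_sum] using this
    have main : ∀ m : ℕ, ∀ i : Fin n, (i : ℕ) < m → c i = 0 := by
      intro m
      induction m with
      | zero => intro i hi; omega
      | succ m IH =>
        intro i hi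
        by_cases h' : (i : ℕ) < m
        · exact IH i h'
        have hat : (∑ j, c j • B j) i = 0 := by rw [hfun]; rfl
        rw [Finset.sum_apply] at hat
        have hone : ∑ j, (c j • B j) i = c i * B i i := by
          refine Finset.sum_eq_single i (fun j _ hji => ?_) (by simp)
          rcases lt_or_gt_of_ne hji with hj | hj
          · have hjm : (j : ℕ) < m := by
              have hj' := Fin.lt_def.mp hj; omega
            simp [IH j hjm]
          · simp [hzero j i hj]
        rw [hone] at hat
        have := hpos i
        rcases mul_eq_zero.mp hat with h | h
        · exact h
        · omega
    exact fun i => main n i i.isLt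
  -- spanning
  have hspan : ⊤ ≤ Submodule.span ℤ (Set.range s) := by
    rintro ⟨g, hg⟩ -
    obtain ⟨c, hc⟩ := key n 0 (by omega) g hg (by intro j hj; omega)
    have : (⟨g, hg⟩ : splineSubmodule G w) = ∑ j, c j • s j := by
      apply Subtype.ext
      simpa [s] using hc
    rw [this]
    exact Submodule.sum_mem _ fun j _ =>
      Submodule.smul_mem _ _ (Submodule.subset_span ⟨j, rfl⟩)
  refine ⟨Module.Basis.mk li hspan, fun i => ?_⟩
  rw [Module.Basis.mk_apply]
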